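/- Let A ∈ 𝓡 be fixed and let X⁽¹⁾, X⁽²⁾ be random vectors in [0,∞)^d with distributions F₁, F₂. If F₁ ∈ 𝒮*_A (i.e. the distribution F_A⁽¹⁾ of Y_A⁽¹⁾ = sup{u : X⁽¹⁾ ∈ uA} is strong subexponential), F₂ ∈ 𝓛_A (i.e. F_A⁽²⁾ is long-tailed), and P[X⁽¹⁾ ∈ xA] ≍ P[X⁽²⁾ ∈ xA] (each is big-O of the other as x → ∞), then F₂ ∈ 𝒮*_A. -/

import Mathlib

open MeasureTheory ProbabilityTheory Filter Set Pointwise Asymptotics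

/-- A set `A ⊆ ℝ^d` is increasing if `x ∈ A` and `y ≥ 0` componentwise imply `x + y ∈ A`. -/
def IncreasingSet {d : ℕ} (A : Set (Fin d → ℝ)) : Prop :=
  ∀ x ∈ A, ∀ y : Fin d → ℝ, (∀ i, 0 ≤ y i) → x + y ∈ A

/-- The family 𝓡 of open increasing sets with convex complement and `0 ∉ closure A`. -/
def MemR {d : ℕ} (A : Set (Fin d → ℝ)) : Prop :=
  IsOpen A ∧ IncreasingSet A ∧ Convex ℝ Aᶜ ∧ (0 : Fin d → ℝ) ∉ closure A

/-- `P[X ∈ x·A]`. -/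
noncomputable def probIn {d : ℕ} {Ω : Type*} [MeasurableSpace Ω] (P : Measure Ω)
    (X : Ω → (Fin d → ℝ)) (A : Set (Fin d → ℝ)) (x : ℝ) : ℝ :=
  (P {ω | X ω ∈ x • A}).toReal

/-- `Y_A = sup{u > 0 : X ∈ u·A}`. -/
noncomputable def YA {d : ℕ} {Ω : Type*} (X : Ω → (Fin d → ℝ)) (A : Set (Fin d → ℝ))
    (ω : Ω) : ℝ :=
  sSup {u : ℝ | 0 < u ∧ X ω ∈ u • A}

/-- The tail of the distribution `F_A` of `Y_A`. -/
noncomputable def tailYA {d : ℕ} {Ω : Type*} [MeasurableSpace Ω] (P : Measure Ω)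
    (X : Ω → (Fin d → ℝ)) (A : Set (Fin d → ℝ)) (x : ℝ) : ℝ :=
  (P {ω | x < YA X A ω}).toReal

/-- A (positive) tail function is long-tailed: `T(x−a)/T(x) → 1` for every `a > 0`. -/
def LongTailedFun (T : ℝ → ℝ) : Prop :=
  (∀ x, 0 < T x) ∧ ∀ a > 0, Tendsto (fun x => T (x - a) / T x) atTop (nhds 1)

/-- The mean `μ_V = ∫₀^∞ V̄(y) dy` computed from the tail function. -/
noncomputable def tailMean (T : ℝ → ℝ) : ℝ := ∫ y in Ioi (0 : ℝ), T y

/-- Strong subexponentiality (class 𝒮*) of a tail function: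
`∫₀^x T(x−y)T(y) dy ∼ 2 μ T(x)`, with `μ = ∫₀^∞ T < ∞` and `T > 0`. -/
def StrongSubexpFun (T : ℝ → ℝ) : Prop :=
  (∀ x, 0 < T x) ∧ IntegrableOn T (Ioi 0) volume ∧
    Tendsto (fun x => (∫ y in (0 : ℝ)..x, T (x - y) * T y) / T x) atTop
      (nhds (2 * tailMean T))

/-- `V̄_u(x) = min(1, ∫_x^{x+u} V̄(y) dy)`. -/
noncomputable def tailU (T : ℝ → ℝ) (u x : ℝ) : ℝ := min 1 (∫ y in x..(x + u), T y)

/-- Strongly subexponential (class 𝒮_*): `V̄_u^{2*}(x)/V̄_u(x) → 2` uniformly in `u ∈ [1,∞)`,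
where `V̄_u^{2*}` is the tail of the sum of two independent random variables with tail `V̄_u`. -/
def StronglySubexpFun (T : ℝ → ℝ) : Prop :=
  (∀ x, 0 < T x) ∧ IntegrableOn T (Ioi 0) volume ∧
    ∀ ε > (0 : ℝ), ∃ x₀ : ℝ, ∀ u ≥ (1 : ℝ), ∀ x ≥ x₀,
      ∀ (Ω' : Type) (_ : MeasurableSpace Ω') (Q : Measure Ω'), IsProbabilityMeasure Q →
        ∀ Z₁ Z₂ : Ω' → ℝ, Measurable Z₁ → Measurable Z₂ → IndepFun Z₁ Z₂ Q →
          (∀ z, (Q {ω | z < Z₁ ω}).toReal = tailU T u z) →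
          (∀ z, (Q {ω | z < Z₂ ω}).toReal = tailU T u z) →
          |(Q {ω | x < Z₁ ω + Z₂ ω}).toReal / tailU T u x - 2| < ε

/-- Insensitivity function of a tail function. -/
def Insensitivity (T : ℝ → ℝ) (h : ℝ → ℝ) : Prop :=
  (∀ x, 0 < h x) ∧ Tendsto h atTop atTop ∧ Tendsto (fun x => h x / x) atTop (nhds 0) ∧
    Tendsto (fun x => T (x - h x) / T x) atTop (nhds 1) ∧
    Tendsto (fun x => T (x + h x) / T x) atTop (nhds 1)

/-- Generalized inverse of `h`. -/
noncomputable def geninv (h : ℝ → ℝ) (y : ℝ) : ℝ := sInf {x | 0 ≤ x ∧ y ≤ h x}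


lemma intInt_prod {T S : ℝ → ℝ} (hT : Antitone T) (hS : Antitone S)
    (hT0 : ∀ x, 0 ≤ T x) (hS0 : ∀ x, 0 ≤ S x)
    (hTb : ∀ x, T x ≤ 1) (hSb : ∀ x, S x ≤ 1) (x p q : ℝ) :
    IntervalIntegrable (fun y => T (x - y) * S y) volume p q := by
  rw [intervalIntegrable_iff]
  have hm : Measurable fun y => T (x - y) * S y :=
    (hT.measurable.comp (measurable_const.sub measurable_id)).mul hS.measurable
  apply Integrable.mono' (g := fun _ => (1:ℝ))
  · exact integrableOn_const measure_Ioc_lt_top.ne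
  · exact hm.aestronglyMeasurable
  · filter_upwards with y
    rw [Real.norm_eq_abs, abs_of_nonneg (mul_nonneg (hT0 _) (hS0 _))]
    exact mul_le_one₀ (hTb _) (hS0 _) (hSb _)

lemma sub_int {T : ℝ → ℝ} (x a : ℝ) :
    ∫ y in (x-a)..x, T (x - y) * T y = ∫ y in (0:ℝ)..a, T (x - y) * T y := by
  have := intervalIntegral.integral_comp_sub_left (fun u => T u * T (x - u)) x (a := x - a) (b := x)
  simp only [sub_self, sub_sub_cancel] at this
  rw [show (fun y => T (x-y) * T y) = (fun y => T y * T (x - y)) from funext fun y => mul_comm _ _] at *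
  exact this

lemma intInt_single {T : ℝ → ℝ} (hT : Antitone T) (hT0 : ∀ x, 0 ≤ T x)
    (hTb : ∀ x, T x ≤ 1) (p q : ℝ) : IntervalIntegrable T volume p q := by
  rw [intervalIntegrable_iff]
  apply Integrable.mono' (g := fun _ => (1:ℝ))
  · exact integrableOn_const measure_Ioc_lt_top.ne
  · exact hT.measurable.aestronglyMeasurable
  · filter_upwards with y
    rw [Real.norm_eq_abs, abs_of_nonneg (hT0 y)]
    exact hTb y

lemma key_est {T₁ T₂ : ℝ → ℝ}
    (h₁anti : Antitone T₁) (h₂anti : Antitone T₂)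
    (h₁0 : ∀ x, 0 ≤ T₁ x) (h₂0 : ∀ x, 0 ≤ T₂ x)
    (h₁le : ∀ x, T₁ x ≤ 1) (h₂le : ∀ x, T₂ x ≤ 1)
    {C x₀ : ℝ} (hC : 1 ≤ C)
    (hcomp : ∀ x ≥ x₀, T₂ x ≤ C * T₁ x ∧ T₁ x ≤ C * T₂ x)
    {ε a x μ₁ μ₂ : ℝ} (hε : 0 < ε) (hax₀ : x₀ ≤ a) (ha : 0 < a)
    (hJ₂lo : μ₂ - ε ≤ ∫ y in (0:ℝ)..a, T₂ y)
    (hJ₂hi : (∫ y in (0:ℝ)..a, T₂ y) ≤ μ₂)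
    (hJ₁lo : μ₁ - ε ≤ ∫ y in (0:ℝ)..a, T₁ y)
    (hx2a : 2*a ≤ x)
    (hins : T₂ (x - a) ≤ (1+ε) * T₂ x)
    (hSx : (∫ y in (0:ℝ)..x, T₁ (x-y) * T₁ y) ≤ (2*μ₁ + ε) * T₁ x) :
    2*(μ₂ - ε) * T₂ x ≤ (∫ y in (0:ℝ)..x, T₂ (x-y) * T₂ y) ∧
      (∫ y in (0:ℝ)..x, T₂ (x-y) * T₂ y) ≤ (2*(1+ε)*μ₂ + 3*ε*C^3) * T₂ x := by
  have hC0 : (0:ℝ) ≤ C := le_trans zero_le_one hC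
  have ii₂ : ∀ p q : ℝ, IntervalIntegrable (fun y => T₂ (x-y) * T₂ y) volume p q :=
    intInt_prod h₂anti h₂anti h₂0 h₂0 h₂le h₂le x
  have ii₁ : ∀ p q : ℝ, IntervalIntegrable (fun y => T₁ (x-y) * T₁ y) volume p q :=
    intInt_prod h₁anti h₁anti h₁0 h₁0 h₁le h₁le x
  have haa : a ≤ x - a := by linarith
  -- splits
  have split₂ : (∫ y in (0:ℝ)..x, T₂ (x-y) * T₂ y)
      = (∫ y in (0:ℝ)..a, T₂ (x-y) * T₂ y) + (∫ y in a..(x-a), T₂ (x-y) * T₂ y)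
        + (∫ y in (0:ℝ)..a, T₂ (x-y) * T₂ y) := by
    rw [← intervalIntegral.integral_add_adjacent_intervals (ii₂ 0 a) (ii₂ a x),
      ← intervalIntegral.integral_add_adjacent_intervals (ii₂ a (x-a)) (ii₂ (x-a) x),
      sub_int (T := T₂) x a]
    ring
  have split₁ : (∫ y in (0:ℝ)..x, T₁ (x-y) * T₁ y)
      = (∫ y in (0:ℝ)..a, T₁ (x-y) * T₁ y) + (∫ y in a..(x-a), T₁ (x-y) * T₁ y)
        + (∫ y in (0:ℝ)..a, T₁ (x-y) * T₁ y) := by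
    rw [← intervalIntegral.integral_add_adjacent_intervals (ii₁ 0 a) (ii₁ a x),
      ← intervalIntegral.integral_add_adjacent_intervals (ii₁ a (x-a)) (ii₁ (x-a) x),
      sub_int (T := T₁) x a]
    ring
  -- first piece bounds for T₂
  have hJ₂nn : (0:ℝ) ≤ ∫ y in (0:ℝ)..a, T₂ y :=
    intervalIntegral.integral_nonneg ha.le (fun y _ => h₂0 y)
  have hμ₂nn : (0:ℝ) ≤ μ₂ := le_trans hJ₂nn hJ₂hi
  have hF₂lo : T₂ x * (∫ y in (0:ℝ)..a, T₂ y) ≤ ∫ y in (0:ℝ)..a, T₂ (x-y) * T₂ y := by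
    rw [← intervalIntegral.integral_const_mul]
    apply intervalIntegral.integral_mono_on ha.le
      ((intInt_single h₂anti h₂0 h₂le 0 a).const_mul _) (ii₂ 0 a)
    intro y hy
    exact mul_le_mul_of_nonneg_right (h₂anti (by linarith [hy.1] : x - y ≤ x)) (h₂0 y)
  have hF₂hi : (∫ y in (0:ℝ)..a, T₂ (x-y) * T₂ y) ≤ T₂ (x-a) * (∫ y in (0:ℝ)..a, T₂ y) := by
    rw [← intervalIntegral.integral_const_mul]
    apply intervalIntegral.integral_mono_on ha.le (ii₂ 0 a)
      ((intInt_single h₂anti h₂0 h₂le 0 a).const_mul _)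
    intro y hy
    exact mul_le_mul_of_nonneg_right (h₂anti (by linarith [hy.2] : x - a ≤ x - y)) (h₂0 y)
  -- first piece lower bound for T₁
  have hF₁lo : T₁ x * (∫ y in (0:ℝ)..a, T₁ y) ≤ ∫ y in (0:ℝ)..a, T₁ (x-y) * T₁ y := by
    rw [← intervalIntegral.integral_const_mul]
    apply intervalIntegral.integral_mono_on ha.le
      ((intInt_single h₁anti h₁0 h₁le 0 a).const_mul _) (ii₁ 0 a)
    intro y hy
    exact mul_le_mul_of_nonneg_right (h₁anti (by linarith [hy.1] : x - y ≤ x)) (h₁0 y)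
  -- middle bounds
  have hM₂nn : (0:ℝ) ≤ ∫ y in a..(x-a), T₂ (x-y) * T₂ y :=
    intervalIntegral.integral_nonneg haa (fun y _ => mul_nonneg (h₂0 _) (h₂0 _))
  have hM₂le : (∫ y in a..(x-a), T₂ (x-y) * T₂ y)
      ≤ C^2 * ∫ y in a..(x-a), T₁ (x-y) * T₁ y := by
    rw [← intervalIntegral.integral_const_mul]
    apply intervalIntegral.integral_mono_on haa (ii₂ a (x-a)) ((ii₁ a (x-a)).const_mul _)
    intro y hy
    have h1 : T₂ (x - y) ≤ C * T₁ (x - y) := (hcomp _ (by linarith [hy.2] : x₀ ≤ x - y)).1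
    have h2 : T₂ y ≤ C * T₁ y := (hcomp _ (by linarith [hy.1] : x₀ ≤ y)).1
    calc T₂ (x-y) * T₂ y ≤ (C * T₁ (x-y)) * (C * T₁ y) :=
          mul_le_mul h1 h2 (h₂0 _) (mul_nonneg hC0 (h₁0 _))
      _ = C^2 * (T₁ (x-y) * T₁ y) := by ring
  have hM₁le : (∫ y in a..(x-a), T₁ (x-y) * T₁ y) ≤ 3*ε*T₁ x := by
    nlinarith [mul_le_mul_of_nonneg_left hJ₁lo (h₁0 x)]
  constructor
  · nlinarith [mul_le_mul_of_nonneg_left hJ₂lo (h₂0 x)]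
  · have hx₀x : x₀ ≤ x := by linarith
    have h4 : T₁ x ≤ C * T₂ x := (hcomp x hx₀x).2
    have h5 : T₂ (x-a) * (∫ y in (0:ℝ)..a, T₂ y) ≤ ((1+ε) * T₂ x) * μ₂ :=
      mul_le_mul hins hJ₂hi hJ₂nn (mul_nonneg (by linarith) (h₂0 x))
    have h6 : C^2 * (∫ y in a..(x-a), T₁ (x-y) * T₁ y) ≤ C^2 * (3*ε*T₁ x) :=
      mul_le_mul_of_nonneg_left hM₁le (by positivity)
    nlinarith [mul_le_mul_of_nonneg_left h4 (mul_nonneg (mul_nonneg (by norm_num) hε.le) (pow_nonneg hC0 2) : (0:ℝ) ≤ 3*ε*C^2)]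

lemma J_le_mean {T : ℝ → ℝ} (hint : IntegrableOn T (Ioi 0) volume)
    (h0 : ∀ x, 0 ≤ T x) {a : ℝ} (ha : 0 ≤ a) :
    (∫ y in (0:ℝ)..a, T y) ≤ tailMean T := by
  rw [intervalIntegral.integral_of_le ha]
  apply setIntegral_mono_set hint
  · filter_upwards with y using h0 y
  · filter_upwards with y hy using hy.1

lemma key_tendsto {T₁ T₂ : ℝ → ℝ}
    (h₁anti : Antitone T₁) (h₂anti : Antitone T₂)
    (h₁pos : ∀ x, 0 < T₁ x) (h₂pos : ∀ x, 0 < T₂ x)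
    (h₁le : ∀ x, T₁ x ≤ 1) (h₂le : ∀ x, T₂ x ≤ 1)
    (h₁int : IntegrableOn T₁ (Ioi 0) volume)
    (h₂int : IntegrableOn T₂ (Ioi 0) volume)
    (h₁S : Tendsto (fun x => (∫ y in (0:ℝ)..x, T₁ (x - y) * T₁ y) / T₁ x) atTop
      (nhds (2 * tailMean T₁)))
    (h₂long : ∀ a > (0:ℝ), Tendsto (fun x => T₂ (x - a) / T₂ x) atTop (nhds 1))
    {C x₀ : ℝ} (hC : 1 ≤ C) (hx₀ : 0 < x₀)
    (hcomp : ∀ x ≥ x₀, T₂ x ≤ C * T₁ x ∧ T₁ x ≤ C * T₂ x) :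
    Tendsto (fun x => (∫ y in (0:ℝ)..x, T₂ (x - y) * T₂ y) / T₂ x) atTop
      (nhds (2 * tailMean T₂)) := by
  have h₁0 : ∀ x, 0 ≤ T₁ x := fun x => (h₁pos x).le
  have h₂0 : ∀ x, 0 ≤ T₂ x := fun x => (h₂pos x).le
  have hC0 : (0:ℝ) ≤ C := le_trans zero_le_one hC
  have hC3 : (1:ℝ) ≤ C^3 := one_le_pow₀ hC
  set μ₁ := tailMean T₁ with hμ₁
  set μ₂ := tailMean T₂ with hμ₂
  have hμ₂nn : 0 ≤ μ₂ := setIntegral_nonneg measurableSet_Ioi (fun y _ => h₂0 y)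
  rw [Metric.tendsto_atTop]
  intro ε' hε'
  set K : ℝ := 2 + 2*μ₂ + 3*C^3 + 1 with hK
  have hKpos : 0 < K := by nlinarith
  set ε : ℝ := ε' / K with hε
  have hεpos : 0 < ε := div_pos hε' hKpos
  have hεK : ε * K = ε' := div_mul_cancel₀ _ (ne_of_gt hKpos)
  have hexp : 3*ε + 2*(ε*μ₂) + 3*(ε*C^3) = ε' := by rw [← hεK, hK]; ring
  -- choose a
  have tJ₂ : Tendsto (fun a => ∫ y in (0:ℝ)..a, T₂ y) atTop (nhds μ₂) :=
    intervalIntegral_tendsto_integral_Ioi 0 h₂int tendsto_id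
  have tJ₁ : Tendsto (fun a => ∫ y in (0:ℝ)..a, T₁ y) atTop (nhds μ₁) :=
    intervalIntegral_tendsto_integral_Ioi 0 h₁int tendsto_id
  have hA : ∀ᶠ a in atTop, (μ₂ - ε ≤ ∫ y in (0:ℝ)..a, T₂ y) ∧
      (μ₁ - ε ≤ ∫ y in (0:ℝ)..a, T₁ y) ∧ x₀ ≤ a ∧ 0 < a := by
    have e1 := tJ₂.eventually (eventually_ge_nhds (show μ₂ - ε < μ₂ by linarith))
    have e2 := tJ₁.eventually (eventually_ge_nhds (show μ₁ - ε < μ₁ by linarith))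
    filter_upwards [e1, e2, eventually_ge_atTop x₀, eventually_gt_atTop 0] with b b1 b2 b3 b4
    exact ⟨b1, b2, b3, b4⟩
  obtain ⟨a, hJ₂lo, hJ₁lo, hax₀, ha⟩ := hA.exists
  have hJ₂hi : (∫ y in (0:ℝ)..a, T₂ y) ≤ μ₂ := J_le_mean h₂int h₂0 ha.le
  -- choose x₁
  have hB : ∀ᶠ x in atTop, T₂ (x - a) ≤ (1+ε) * T₂ x ∧
      (∫ y in (0:ℝ)..x, T₁ (x-y) * T₁ y) ≤ (2*μ₁ + ε) * T₁ x ∧ 2*a ≤ x := by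
    have b1 := (h₂long a ha).eventually (eventually_le_nhds (show (1:ℝ) < 1 + ε by linarith))
    have b2 := h₁S.eventually (eventually_le_nhds (show 2*μ₁ < 2*μ₁ + ε by linarith))
    filter_upwards [b1, b2, eventually_ge_atTop (2*a)] with x k1 k2 k3
    exact ⟨(div_le_iff₀ (h₂pos x)).1 k1, (div_le_iff₀ (h₁pos x)).1 k2, k3⟩
  obtain ⟨x₁, hx₁⟩ := eventually_atTop.1 hB
  refine ⟨x₁, fun x hx => ?_⟩
  obtain ⟨hins, hSx, hx2a⟩ := hx₁ x hx
  obtain ⟨hlo, hhi⟩ := key_est h₁anti h₂anti h₁0 h₂0 h₁le h₂le hC hcomp hεpos hax₀ ha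
    hJ₂lo hJ₂hi hJ₁lo hx2a hins hSx
  rw [Real.dist_eq, abs_lt]
  have hT₂x := h₂pos x
  have nn1 : 0 ≤ ε*μ₂ := mul_nonneg hεpos.le hμ₂nn
  have nn2 : 0 ≤ ε*C^3 := mul_nonneg hεpos.le (by linarith)
  constructor
  · have h7 : 2*(μ₂ - ε) ≤ (∫ y in (0:ℝ)..x, T₂ (x-y) * T₂ y) / T₂ x := by
      rw [le_div_iff₀ hT₂x]; linarith
    linarith
  · have h8 : (∫ y in (0:ℝ)..x, T₂ (x-y) * T₂ y) / T₂ x ≤ 2*(1+ε)*μ₂ + 3*ε*C^3 := by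
      rw [div_le_iff₀ hT₂x]; linarith
    nlinarith


lemma YA_mem_smul {d : ℕ} {Ω : Type*} (X : Ω → (Fin d → ℝ)) {A : Set (Fin d → ℝ)}
    (hinc : IncreasingSet A) (hXpos : ∀ ω i, 0 ≤ X ω i) {x : ℝ} (hx : 0 < x) (ω : Ω)
    (h : x < YA X A ω) : X ω ∈ x • A := by
  set S := {u : ℝ | 0 < u ∧ X ω ∈ u • A} with hS
  have hne : S.Nonempty := by
    by_contra hc
    rw [not_nonempty_iff_eq_empty] at hc
    have : YA X A ω = 0 := by rw [YA, ← hS, hc, Real.sSup_empty]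
    rw [this] at h; linarith
  obtain ⟨u, hu, hxu⟩ := exists_lt_of_lt_csSup hne h
  obtain ⟨hu0, hmem⟩ := hu
  obtain ⟨b, hbA, hb⟩ := hmem
  have hbpos : ∀ i, 0 ≤ b i := by
    intro i
    have : u * b i = X ω i := by rw [← hb]; simp
    nlinarith [hXpos ω i]
  have hdiv : (1:ℝ) ≤ u / x := (one_le_div hx).2 hxu.le
  refine ⟨(u / x) • b, ?_, ?_⟩
  · have := hinc b hbA (((u / x) - 1) • b) (fun i => by
      simp only [Pi.smul_apply, smul_eq_mul]
      exact mul_nonneg (by linarith) (hbpos i))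
    convert this using 1
    funext i
    simp only [Pi.add_apply, Pi.smul_apply, smul_eq_mul]
    ring
  · show x • ((u / x) • b) = X ω
    rw [smul_smul, mul_div_cancel₀ _ (ne_of_gt hx)]
    exact hb

lemma smul_lt_YA {d : ℕ} {Ω : Type*} (X : Ω → (Fin d → ℝ)) {A : Set (Fin d → ℝ)}
    (hcl : (0 : Fin d → ℝ) ∉ closure A) {x y : ℝ} (hy : y < x) (hx : 0 < x) (ω : Ω)
    (h : X ω ∈ x • A) : y < YA X A ω := by
  rw [Metric.mem_closure_iff] at hcl
  push_neg at hcl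
  obtain ⟨δ, hδ, hsep⟩ := hcl
  have hbdd : BddAbove {u : ℝ | 0 < u ∧ X ω ∈ u • A} := by
    refine ⟨‖X ω‖ / δ, fun u hu => ?_⟩
    obtain ⟨hu0, b, hbA, hb⟩ := hu
    have h1 : δ ≤ ‖b‖ := by
      have := hsep b hbA
      rwa [dist_zero_left] at this
    have h2 : ‖X ω‖ = u * ‖b‖ := by
      rw [← hb, norm_smul, Real.norm_eq_abs, abs_of_pos hu0]
    rw [le_div_iff₀ hδ]
    nlinarith
  have hmem : x ∈ {u : ℝ | 0 < u ∧ X ω ∈ u • A} := ⟨hx, h⟩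
  calc y < x := hy
    _ ≤ YA X A ω := le_csSup hbdd hmem

lemma T₂_integrable {T₁ T₂ : ℝ → ℝ} (h₂anti : Antitone T₂) (h₂0 : ∀ x, 0 ≤ T₂ x)
    (h₂le : ∀ x, T₂ x ≤ 1) (h₁int : IntegrableOn T₁ (Ioi 0) volume)
    {C x₀ : ℝ} (hx₀ : 0 < x₀)
    (hcomp : ∀ x ≥ x₀, T₂ x ≤ C * T₁ x) : IntegrableOn T₂ (Ioi 0) volume := by
  have h1 : IntegrableOn T₂ (Ioc 0 x₀) volume := by
    apply Integrable.mono' (g := fun _ => (1:ℝ))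
    · exact integrableOn_const measure_Ioc_lt_top.ne
    · exact h₂anti.measurable.aestronglyMeasurable
    · filter_upwards with y
      rw [Real.norm_eq_abs, abs_of_nonneg (h₂0 y)]
      exact h₂le y
  have h2 : IntegrableOn T₂ (Ioi x₀) volume := by
    apply Integrable.mono' (g := fun y => C * T₁ y)
    · exact (h₁int.mono_set (Ioi_subset_Ioi hx₀.le)).const_mul C
    · exact h₂anti.measurable.aestronglyMeasurable
    · rw [ae_restrict_iff' measurableSet_Ioi]
      filter_upwards with y hy
      rw [Real.norm_eq_abs, abs_of_nonneg (h₂0 y)]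
      exact hcomp y (le_of_lt hy)
  refine (h1.union h2).mono_set (fun y hy => ?_)
  by_cases h : y ≤ x₀
  · exact Or.inl ⟨hy, h⟩
  · exact Or.inr (lt_of_not_ge h)

lemma probIn_nonneg {d : ℕ} {Ω : Type*} [MeasurableSpace Ω] (P : Measure Ω)
    (X : Ω → (Fin d → ℝ)) (A : Set (Fin d → ℝ)) (x : ℝ) : 0 ≤ probIn P X A x :=
  ENNReal.toReal_nonneg

lemma tailYA_antitone {d : ℕ} {Ω : Type*} [MeasurableSpace Ω] (P : Measure Ω)
    [IsProbabilityMeasure P] (X : Ω → (Fin d → ℝ)) (A : Set (Fin d → ℝ)) :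
    Antitone (tailYA P X A) := fun x y hxy =>
  ENNReal.toReal_mono (measure_ne_top P _)
    (measure_mono (fun ω hω => lt_of_le_of_lt hxy hω))

lemma tailYA_le_one {d : ℕ} {Ω : Type*} [MeasurableSpace Ω] (P : Measure Ω)
    [IsProbabilityMeasure P] (X : Ω → (Fin d → ℝ)) (A : Set (Fin d → ℝ)) (x : ℝ) :
    tailYA P X A x ≤ 1 := by
  rw [tailYA]
  calc (P {ω | x < YA X A ω}).toReal
      ≤ (P univ).toReal :=
        ENNReal.toReal_mono (measure_ne_top P _) (measure_mono (subset_univ _))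
    _ = 1 := by simp

lemma tailYA_le_probIn {d : ℕ} {Ω : Type*} [MeasurableSpace Ω] (P : Measure Ω)
    [IsProbabilityMeasure P] (X : Ω → (Fin d → ℝ)) {A : Set (Fin d → ℝ)}
    (hinc : IncreasingSet A) (hXpos : ∀ ω i, 0 ≤ X ω i) {x : ℝ} (hx : 0 < x) :
    tailYA P X A x ≤ probIn P X A x :=
  ENNReal.toReal_mono (measure_ne_top P _)
    (measure_mono (fun ω hω => YA_mem_smul X hinc hXpos hx ω hω))

lemma probIn_le_tailYA {d : ℕ} {Ω : Type*} [MeasurableSpace Ω] (P : Measure Ω)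
    [IsProbabilityMeasure P] (X : Ω → (Fin d → ℝ)) {A : Set (Fin d → ℝ)}
    (hcl : (0 : Fin d → ℝ) ∉ closure A) {x y : ℝ} (hy : y < x) (hx : 0 < x) :
    probIn P X A x ≤ tailYA P X A y :=
  ENNReal.toReal_mono (measure_ne_top P _)
    (measure_mono (fun ω hω => smul_lt_YA X hcl hy hx ω hω))

/-- Closure of `𝒮*_A` under weak tail-equivalence within `𝓛_A`:
if `F₁ ∈ 𝒮*_A`, `F₂ ∈ 𝓛_A` and `P[X⁽¹⁾ ∈ xA] ≍ P[X⁽²⁾ ∈ xA]`, then `F₂ ∈ 𝒮*_A`. -/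
theorem statement2 {d : ℕ} (A : Set (Fin d → ℝ)) (hA : MemR A)
    {Ω : Type*} [MeasurableSpace Ω] (P : Measure Ω) [IsProbabilityMeasure P]
    (X₁ X₂ : Ω → (Fin d → ℝ)) (hX₁ : Measurable X₁) (hX₂ : Measurable X₂)
    (hX₁pos : ∀ ω i, 0 ≤ X₁ ω i) (hX₂pos : ∀ ω i, 0 ≤ X₂ ω i)
    (h₁ : StrongSubexpFun (tailYA P X₁ A))
    (h₂ : LongTailedFun (tailYA P X₂ A))
    (hO₁ : (fun x => probIn P X₁ A x) =O[atTop] fun x => probIn P X₂ A x)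
    (hO₂ : (fun x => probIn P X₂ A x) =O[atTop] fun x => probIn P X₁ A x) :
    StrongSubexpFun (tailYA P X₂ A) := by
  obtain ⟨hAopen, hAinc, hAconv, hAcl⟩ := hA
  obtain ⟨h₁pos, h₁int, h₁S⟩ := h₁
  obtain ⟨h₂pos, h₂long⟩ := h₂
  set T₁ := tailYA P X₁ A with hT₁def
  set T₂ := tailYA P X₂ A with hT₂def
  have h₁anti : Antitone T₁ := tailYA_antitone P X₁ A
  have h₂anti : Antitone T₂ := tailYA_antitone P X₂ A
  have h₁le : ∀ x, T₁ x ≤ 1 := tailYA_le_one P X₁ A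
  have h₂le : ∀ x, T₂ x ≤ 1 := tailYA_le_one P X₂ A
  have h₁0 : ∀ x, 0 ≤ T₁ x := fun x => (h₁pos x).le
  have h₂0 : ∀ x, 0 ≤ T₂ x := fun x => (h₂pos x).le
  -- extract big-O constants
  obtain ⟨c₁, hc₁⟩ := isBigO_iff.1 hO₁
  obtain ⟨N₁, hN₁⟩ := eventually_atTop.1 hc₁
  obtain ⟨c₂, hc₂⟩ := isBigO_iff.1 hO₂
  obtain ⟨N₂, hN₂⟩ := eventually_atTop.1 hc₂
  set c₁' : ℝ := max c₁ 0 with hc₁'def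
  set c₂' : ℝ := max c₂ 0 with hc₂'def
  have hc₁'0 : 0 ≤ c₁' := le_max_right _ _
  have hc₂'0 : 0 ≤ c₂' := le_max_right _ _
  have hP₁ : ∀ x ≥ N₁, probIn P X₁ A x ≤ c₁' * probIn P X₂ A x := by
    intro x hx
    have := hN₁ x hx
    rw [Real.norm_eq_abs, Real.norm_eq_abs, abs_of_nonneg (probIn_nonneg P X₁ A x),
      abs_of_nonneg (probIn_nonneg P X₂ A x)] at this
    calc probIn P X₁ A x ≤ c₁ * probIn P X₂ A x := this
      _ ≤ c₁' * probIn P X₂ A x :=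
        mul_le_mul_of_nonneg_right (le_max_left _ _) (probIn_nonneg _ _ _ _)
  have hP₂ : ∀ x ≥ N₂, probIn P X₂ A x ≤ c₂' * probIn P X₁ A x := by
    intro x hx
    have := hN₂ x hx
    rw [Real.norm_eq_abs, Real.norm_eq_abs, abs_of_nonneg (probIn_nonneg P X₂ A x),
      abs_of_nonneg (probIn_nonneg P X₁ A x)] at this
    calc probIn P X₂ A x ≤ c₂ * probIn P X₁ A x := this
      _ ≤ c₂' * probIn P X₁ A x :=
        mul_le_mul_of_nonneg_right (le_max_left _ _) (probIn_nonneg _ _ _ _)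
  -- long-tail shift bound for T₂
  obtain ⟨M, hM⟩ := eventually_atTop.1
    ((h₂long 1 one_pos).eventually (eventually_le_nhds one_lt_two))
  have hM' : ∀ x ≥ M, T₂ (x - 1) ≤ 2 * T₂ x := fun x hx => by
    have := hM x hx
    rw [div_le_iff₀ (h₂pos x)] at this
    linarith
  -- comparison constant
  set x₀ : ℝ := max 2 (max N₁ (max N₂ M)) with hx₀def
  have hx₀2 : (2:ℝ) ≤ x₀ := le_max_left _ _
  have hx₀pos : (0:ℝ) < x₀ := by linarith
  set C : ℝ := max 1 (max (2*c₁') (2*c₂')) with hCdef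
  have hC : (1:ℝ) ≤ C := le_max_left _ _
  have hcomp : ∀ x ≥ x₀, T₂ x ≤ C * T₁ x ∧ T₁ x ≤ C * T₂ x := by
    intro x hx
    have hx2 : (2:ℝ) ≤ x := le_trans hx₀2 hx
    have hxN₁ : N₁ ≤ x := le_trans (le_trans (le_max_left _ _) (le_max_right _ _)) hx
    have hxN₂ : N₂ ≤ x :=
      le_trans (le_trans (le_trans (le_max_left _ _) (le_max_right _ _)) (le_max_right _ _)) hx
    have hxM : M ≤ x :=
      le_trans (le_trans (le_trans (le_max_right _ _) (le_max_right _ _)) (le_max_right _ _)) hx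
    have hxpos : (0:ℝ) < x := by linarith
    constructor
    · -- T₂ x ≤ C * T₁ x
      have t1 : T₂ x ≤ 2 * T₂ (x + 1) := by
        have := hM' (x + 1) (by linarith)
        rwa [add_sub_cancel_right] at this
      have t2 : T₂ (x + 1) ≤ probIn P X₂ A (x + 1) :=
        tailYA_le_probIn P X₂ hAinc hX₂pos (by linarith)
      have t3 : probIn P X₂ A (x + 1) ≤ c₂' * probIn P X₁ A (x + 1) :=
        hP₂ (x + 1) (by linarith)
      have t4 : probIn P X₁ A (x + 1) ≤ T₁ x :=
        probIn_le_tailYA P X₁ hAcl (lt_add_one x) (by linarith)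
      have t5 : c₂' * probIn P X₁ A (x + 1) ≤ c₂' * T₁ x :=
        mul_le_mul_of_nonneg_left t4 hc₂'0
      have t6 : 2 * c₂' ≤ C := le_trans (le_max_right _ _) (le_max_right _ _)
      have t7 : (2 * c₂') * T₁ x ≤ C * T₁ x := mul_le_mul_of_nonneg_right t6 (h₁0 x)
      nlinarith [mul_le_mul_of_nonneg_left (le_trans t2 (le_trans t3 t5))
        (by norm_num : (0:ℝ) ≤ 2)]
    · -- T₁ x ≤ C * T₂ x
      have s1 : T₁ x ≤ probIn P X₁ A x := tailYA_le_probIn P X₁ hAinc hX₁pos hxpos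
      have s2 : probIn P X₁ A x ≤ c₁' * probIn P X₂ A x := hP₁ x hxN₁
      have s3 : probIn P X₂ A x ≤ T₂ (x - 1) :=
        probIn_le_tailYA P X₂ hAcl (by linarith : x - 1 < x) hxpos
      have s4 : T₂ (x - 1) ≤ 2 * T₂ x := hM' x hxM
      have s5 : c₁' * probIn P X₂ A x ≤ c₁' * (2 * T₂ x) :=
        mul_le_mul_of_nonneg_left (le_trans s3 s4) hc₁'0
      have s6 : 2 * c₁' ≤ C := le_trans (le_max_left _ _) (le_max_right _ _)
      have s7 : (2 * c₁') * T₂ x ≤ C * T₂ x := mul_le_mul_of_nonneg_right s6 (h₂0 x)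
      nlinarith
  have h₂int : IntegrableOn T₂ (Ioi 0) volume :=
    T₂_integrable h₂anti h₂0 h₂le h₁int hx₀pos (fun x hx => (hcomp x hx).1)
  exact ⟨h₂pos, h₂int,
    key_tendsto h₁anti h₂anti h₁pos h₂pos h₁le h₂le h₁int h₂int h₁S h₂long hC hx₀pos hcomp⟩
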